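/- Let (X,ρ,μ) be a space of homogeneous type, let q ∈ (0,∞), and let N be a ball quasi-Banach function quasi-norm on (X,μ). If f is a measurable function on X for which there exists s₀ ∈ (0,1) with N((∫_X |f(·)−f(y)|^q/(U(·,y)·ρ(·,y)^{s₀q}) dμ(y))^{1/q}) < ∞, then for every R ∈ (0,∞), lim_{s→0⁺} s^{1/q}·N((∫_{B(·,R)} |f(·)−f(y)|^q/(U(·,y)·ρ(·,y)^{sq}) dμ(y))^{1/q}) = 0. -/

import Mathlib

noncomputable section

open MeasureTheory Filter Set
open scoped ENNReal NNReal Topology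

namespace Paper

variable {X : Type*} [MeasurableSpace X]

/-- The ball with center `x` and radius `r` for the quasi-metric `ρ`. -/
def ball (ρ : X → X → ℝ) (x : X) (r : ℝ) : Set X := {y | ρ x y < r}

/-- `(X, ρ, μ)` is a quasi-metric measure space with quasi-triangle constant `K₀`:
`ρ` is a quasi-metric with constant `K₀` and all `ρ`-balls are `μ`-measurable. -/
structure IsQuasiMetricMeasure (ρ : X → X → ℝ) (μ : Measure X) (K₀ : ℝ) : Prop where
  nonneg : ∀ x y, 0 ≤ ρ x y
  eq_zero_iff : ∀ x y, ρ x y = 0 ↔ x = y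
  symm : ∀ x y, ρ x y = ρ y x
  one_le : 1 ≤ K₀
  triangle : ∀ x y z, ρ x z ≤ K₀ * (ρ x y + ρ y z)
  measurableSet_ball : ∀ x r, MeasurableSet (ball ρ x r)

/-- The doubling condition for `μ` with doubling constant `L ∈ [1, ∞)`:
`0 < μ(B(x,2r)) ≤ L · μ(B(x,r)) < ∞` for all `x` and `r > 0`. -/
def IsDoubling (ρ : X → X → ℝ) (μ : Measure X) (L : ℝ≥0∞) : Prop :=
  1 ≤ L ∧ L < ∞ ∧ ∀ (x : X) (r : ℝ), 0 < r →
    0 < μ (ball ρ x r) ∧ μ (ball ρ x (2 * r)) ≤ L * μ (ball ρ x r) ∧ μ (ball ρ x r) < ∞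

/-- `U(x,y) := min{μ(B(x,ρ(x,y))), μ(B(y,ρ(x,y)))}`. -/
def U (ρ : X → X → ℝ) (μ : Measure X) (x y : X) : ℝ≥0∞ :=
  min (μ (ball ρ x (ρ x y))) (μ (ball ρ y (ρ x y)))

/-- `N` is a ball quasi-Banach function quasi-norm on `(X, μ)` (balls taken with
respect to `ρ`), with quasi-triangle constant `κ ∈ [1,∞)`. -/
structure IsBallQBFNorm (ρ : X → X → ℝ) (μ : Measure X)
    (N : (X → ℝ≥0∞) → ℝ≥0∞) (κ : ℝ≥0∞) : Prop where
  one_le_kappa : 1 ≤ κ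
  kappa_lt_top : κ < ∞
  eq_zero_iff : ∀ f : X → ℝ≥0∞, N f = 0 ↔ f =ᵐ[μ] 0
  mono : ∀ f g : X → ℝ≥0∞, (∀ᵐ x ∂μ, g x ≤ f x) → N g ≤ N f
  iSup_seq : ∀ F : ℕ → X → ℝ≥0∞, (∀ᵐ x ∂μ, Monotone fun m => F m x) →
    N (fun x => ⨆ m, F m x) = ⨆ m, N (F m)
  indicator_ball_lt_top : ∀ (x : X) (r : ℝ), 0 < r →
    N ((ball ρ x r).indicator fun _ => 1) < ∞
  smul : ∀ (c : ℝ≥0) (f : X → ℝ≥0∞), N (fun x => c * f x) = c * N f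
  add_le : ∀ f g : X → ℝ≥0∞, N (fun x => f x + g x) ≤ κ * (N f + N g)

/-- The Maz'ya–Shaposhnikova integrand on a set `E`:
`x ↦ (∫_E |f(x) − f(y)|^q / (U(x,y) ρ(x,y)^{sq}) dμ(y))^{1/q}`. -/
def sob (ρ : X → X → ℝ) (μ : Measure X) (E : Set X) (f : X → ℝ) (q s : ℝ) (x : X) :
    ℝ≥0∞ :=
  (∫⁻ y in E, ENNReal.ofReal |f x - f y| ^ q /
      (U ρ μ x y * ENNReal.ofReal (ρ x y) ^ (s * q)) ∂μ) ^ (1 / q)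

theorem statement1 [Nonempty X] (ρ : X → X → ℝ) (μ : Measure X) (K₀ : ℝ) (L : ℝ≥0∞)
    (hX : IsQuasiMetricMeasure ρ μ K₀) (hL : IsDoubling ρ μ L)
    (q : ℝ) (hq : 0 < q)
    (N : (X → ℝ≥0∞) → ℝ≥0∞) (κ : ℝ≥0∞) (hN : IsBallQBFNorm ρ μ N κ)
    (f : X → ℝ) (hf : Measurable f)
    (hfin : ∃ s₀ ∈ Set.Ioo (0:ℝ) 1, N (sob ρ μ Set.univ f q s₀) < ∞) :
    ∀ R : ℝ, 0 < R →
      Tendsto (fun s : ℝ => ENNReal.ofReal s ^ (1 / q) *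
          N (fun x => (∫⁻ y in ball ρ x R, ENNReal.ofReal |f x - f y| ^ q /
              (U ρ μ x y * ENNReal.ofReal (ρ x y) ^ (s * q)) ∂μ) ^ (1 / q)))
        (𝓝[>] (0:ℝ)) (𝓝 0) := by
  obtain ⟨s₀, ⟨hs₀0, hs₀1⟩, hfin⟩ := hfin
  intro R hR
  set oR := ENNReal.ofReal R with hoR
  set C : ℝ≥0∞ := (max 1 oR) ^ (s₀ * q) with hCdef
  have hs₀q : 0 < s₀ * q := mul_pos hs₀0 hq
  have hC1 : 1 ≤ C := by
    calc (1:ℝ≥0∞) = 1 ^ (s₀ * q) := (ENNReal.one_rpow _).symm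
    _ ≤ C := ENNReal.rpow_le_rpow (le_max_left _ _) hs₀q.le
  have hC0 : C ≠ 0 := by positivity
  have hmaxtop : max 1 oR ≠ ∞ := by
    simp [hoR, ENNReal.ofReal_ne_top]
  have hCtop : C ≠ ∞ := ENNReal.rpow_ne_top_of_nonneg hs₀q.le hmaxtop
  set c : ℝ≥0∞ := C ^ (1 / q) with hcdef
  have hctop : c ≠ ∞ := ENNReal.rpow_ne_top_of_nonneg (by positivity) hCtop
  set M : ℝ≥0∞ := c * N (sob ρ μ Set.univ f q s₀) with hM
  have hMtop : M ≠ ∞ := ENNReal.mul_ne_top hctop hfin.ne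
  -- pointwise bound on the integrand
  have hpt : ∀ s ∈ Set.Ioo (0:ℝ) s₀, ∀ x y, ρ x y < R →
      ENNReal.ofReal |f x - f y| ^ q / (U ρ μ x y * ENNReal.ofReal (ρ x y) ^ (s * q)) ≤
      C * (ENNReal.ofReal |f x - f y| ^ q /
        (U ρ μ x y * ENNReal.ofReal (ρ x y) ^ (s₀ * q))) := by
    intro s hs x y hy
    by_cases hxy : x = y
    · subst hxy
      simp [ENNReal.zero_rpow_of_pos hq]
    · have ht0 : ρ x y ≠ 0 := fun h => hxy ((hX.eq_zero_iff x y).mp h)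
      have htpos : 0 < ρ x y := lt_of_le_of_ne (hX.nonneg x y) (Ne.symm ht0)
      set t := ENNReal.ofReal (ρ x y) with htdef
      have ht0' : t ≠ 0 := by
        simp [htdef, ENNReal.ofReal_pos.2 htpos |>.ne']
      have httop : t ≠ ∞ := ENNReal.ofReal_ne_top
      have hsplit : t ^ (s₀ * q) = t ^ (s * q) * t ^ ((s₀ - s) * q) := by
        rw [← ENNReal.rpow_add _ _ ht0' httop]; ring_nf
      have hbound : t ^ ((s₀ - s) * q) ≤ C := by
        rcases le_or_gt t 1 with h1 | h1
        · exact le_trans (ENNReal.rpow_le_one h1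
            (mul_nonneg (by linarith [hs.2]) hq.le)) hC1
        · calc t ^ ((s₀ - s) * q) ≤ t ^ (s₀ * q) :=
              ENNReal.rpow_le_rpow_of_exponent_le h1.le (by nlinarith [hs.1, hq])
          _ ≤ C := ENNReal.rpow_le_rpow
              (le_trans (ENNReal.ofReal_le_ofReal hy.le) (le_max_right _ _)) hs₀q.le
      have hd : U ρ μ x y * t ^ (s₀ * q) ≤ C * (U ρ μ x y * t ^ (s * q)) := by
        rw [hsplit]
        calc U ρ μ x y * (t ^ (s * q) * t ^ ((s₀ - s) * q))
            = (U ρ μ x y * t ^ (s * q)) * t ^ ((s₀ - s) * q) := by ring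
          _ ≤ (U ρ μ x y * t ^ (s * q)) * C := mul_le_mul_right hbound _
          _ = C * (U ρ μ x y * t ^ (s * q)) := mul_comm _ _
      set a := ENNReal.ofReal |f x - f y| ^ q
      calc a / (U ρ μ x y * t ^ (s * q))
          = (C * a) / (C * (U ρ μ x y * t ^ (s * q))) :=
            (ENNReal.mul_div_mul_left _ _ hC0 hCtop).symm
        _ ≤ (C * a) / (U ρ μ x y * t ^ (s₀ * q)) :=
            ENNReal.div_le_div_left hd _
        _ = C * (a / (U ρ μ x y * t ^ (s₀ * q))) := mul_div_assoc _ _ _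
  -- integral bound
  have hint : ∀ s ∈ Set.Ioo (0:ℝ) s₀, ∀ x,
      (∫⁻ y in ball ρ x R, ENNReal.ofReal |f x - f y| ^ q /
          (U ρ μ x y * ENNReal.ofReal (ρ x y) ^ (s * q)) ∂μ) ≤
      C * ∫⁻ y in Set.univ, ENNReal.ofReal |f x - f y| ^ q /
          (U ρ μ x y * ENNReal.ofReal (ρ x y) ^ (s₀ * q)) ∂μ := by
    intro s hs x
    calc (∫⁻ y in ball ρ x R, ENNReal.ofReal |f x - f y| ^ q /
            (U ρ μ x y * ENNReal.ofReal (ρ x y) ^ (s * q)) ∂μ)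
        ≤ ∫⁻ y in ball ρ x R, C * (ENNReal.ofReal |f x - f y| ^ q /
            (U ρ μ x y * ENNReal.ofReal (ρ x y) ^ (s₀ * q))) ∂μ := by
          refine lintegral_mono_ae ((ae_restrict_iff' (hX.measurableSet_ball x R)).2
            (Filter.Eventually.of_forall fun y hy => hpt s hs x y hy))
      _ = C * ∫⁻ y in ball ρ x R, ENNReal.ofReal |f x - f y| ^ q /
            (U ρ μ x y * ENNReal.ofReal (ρ x y) ^ (s₀ * q)) ∂μ :=
          lintegral_const_mul' _ _ hCtop
      _ ≤ C * ∫⁻ y in Set.univ, ENNReal.ofReal |f x - f y| ^ q /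
            (U ρ μ x y * ENNReal.ofReal (ρ x y) ^ (s₀ * q)) ∂μ :=
          mul_le_mul_right (lintegral_mono_set (Set.subset_univ _)) _
  -- pointwise bound for the rpow'd function
  have hg : ∀ s ∈ Set.Ioo (0:ℝ) s₀, ∀ x,
      (∫⁻ y in ball ρ x R, ENNReal.ofReal |f x - f y| ^ q /
          (U ρ μ x y * ENNReal.ofReal (ρ x y) ^ (s * q)) ∂μ) ^ (1 / q) ≤
      c * sob ρ μ Set.univ f q s₀ x := by
    intro s hs x
    unfold sob
    calc (∫⁻ y in ball ρ x R, ENNReal.ofReal |f x - f y| ^ q /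
            (U ρ μ x y * ENNReal.ofReal (ρ x y) ^ (s * q)) ∂μ) ^ (1 / q)
        ≤ (C * ∫⁻ y in Set.univ, ENNReal.ofReal |f x - f y| ^ q /
            (U ρ μ x y * ENNReal.ofReal (ρ x y) ^ (s₀ * q)) ∂μ) ^ (1 / q) :=
          ENNReal.rpow_le_rpow (hint s hs x) (by positivity)
      _ = c * (∫⁻ y in Set.univ, ENNReal.ofReal |f x - f y| ^ q /
            (U ρ μ x y * ENNReal.ofReal (ρ x y) ^ (s₀ * q)) ∂μ) ^ (1 / q) :=
          ENNReal.mul_rpow_of_nonneg _ _ (by positivity)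
  -- N bound
  have key : ∀ s ∈ Set.Ioo (0:ℝ) s₀,
      N (fun x => (∫⁻ y in ball ρ x R, ENNReal.ofReal |f x - f y| ^ q /
          (U ρ μ x y * ENNReal.ofReal (ρ x y) ^ (s * q)) ∂μ) ^ (1 / q)) ≤ M := by
    intro s hs
    have hcoe : ((c.toNNReal : ℝ≥0) : ℝ≥0∞) = c := ENNReal.coe_toNNReal hctop
    have h2 : (fun x => c * sob ρ μ Set.univ f q s₀ x) =
        fun x => ((c.toNNReal : ℝ≥0) : ℝ≥0∞) * sob ρ μ Set.univ f q s₀ x := by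
      rw [hcoe]
    calc N (fun x => (∫⁻ y in ball ρ x R, ENNReal.ofReal |f x - f y| ^ q /
            (U ρ μ x y * ENNReal.ofReal (ρ x y) ^ (s * q)) ∂μ) ^ (1 / q))
        ≤ N (fun x => c * sob ρ μ Set.univ f q s₀ x) :=
          hN.mono _ _ (Filter.Eventually.of_forall (hg s hs))
      _ = c * N (sob ρ μ Set.univ f q s₀) := by
          rw [h2, hN.smul, hcoe]
      _ = M := hM.symm
  -- squeeze
  have hup : Tendsto (fun s : ℝ => ENNReal.ofReal s ^ (1 / q) * M) (𝓝[>] (0:ℝ)) (𝓝 0) := by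
    have h0 : Tendsto (fun s : ℝ => ENNReal.ofReal s) (𝓝[>] (0:ℝ)) (𝓝 0) := by
      have h00 : Tendsto (fun s : ℝ => ENNReal.ofReal s) (𝓝 (0:ℝ)) (𝓝 0) := by
        simpa using ENNReal.continuous_ofReal.tendsto 0
      exact h00.mono_left nhdsWithin_le_nhds
    have h1 : Tendsto (fun s : ℝ => ENNReal.ofReal s ^ (1 / q)) (𝓝[>] (0:ℝ)) (𝓝 0) := by
      have hc : Continuous fun x : ℝ≥0∞ => x ^ (1 / q) :=
        ENNReal.continuous_rpow_const
      have := (hc.tendsto 0).comp h0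
      have hz : (0:ℝ≥0∞) ^ q⁻¹ = 0 :=
        ENNReal.zero_rpow_of_pos (by positivity)
      simpa [Function.comp_def, hz] using this
    have := ENNReal.Tendsto.mul_const h1 (Or.inr hMtop)
    simpa using this
  refine tendsto_of_tendsto_of_tendsto_of_le_of_le' tendsto_const_nhds hup
    (Filter.Eventually.of_forall fun s => zero_le) ?_
  filter_upwards [Ioo_mem_nhdsGT_of_mem (Set.mem_Ico.2 ⟨le_refl 0, hs₀0⟩)] with s hs
  exact mul_le_mul_right (key s hs) _
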